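/- Let A : [0,∞) → ℝ be continuous and define g_{2,A}(s,T) = (m_{1,A}(s,T)m_{2,A}(s,T)σ_A²(s) - m_{2,A}(s)σ_A²(s,T))/(m_{1,A}(s)σ_A²(s,T)). Then g_{2,A}(s,T) = (σ_A²(T)/m_{1,A}(T)) · (m_{2,A}(s,T)/σ_A²(s,T)) - m_{2,A}(T)/m_{1,A}(T), and ∂g_{2,A}(s,T)/∂s = (σ_A²(T)/(m_{1,A}(s)σ_A⁴(s,T))) · (m_{1,A}(s,T)m_{2,A}(s,T) - σ_A²(s,T)). In particular, if A is non-negative, then s ↦ g_{2,A}(s,T) is non-decreasing on (0,T). -/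

import Mathlib

noncomputable def m1 (A : ℝ → ℝ) (s T : ℝ) : ℝ := Real.exp (∫ u in s..T, A u)

noncomputable def m2 (A : ℝ → ℝ) (s T : ℝ) : ℝ :=
  ∫ u in s..T, Real.exp (∫ v in u..T, A v)

noncomputable def sig2 (A : ℝ → ℝ) (s T : ℝ) : ℝ :=
  ∫ u in s..T, Real.exp (2 * ∫ v in u..T, A v)

noncomputable def g2 (A : ℝ → ℝ) (s T : ℝ) : ℝ :=
  (m1 A s T * m2 A s T * sig2 A 0 s - m2 A 0 s * sig2 A s T) /
    (m1 A 0 s * sig2 A s T)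

open intervalIntegral MeasureTheory Set

variable {A : ℝ → ℝ}

lemma hasDerivF (hA : Continuous A) (T u : ℝ) :
    HasDerivAt (fun s => ∫ v in s..T, A v) (-A u) u :=
  intervalIntegral.integral_hasDerivAt_left (hA.intervalIntegrable _ _)
    (hA.stronglyMeasurableAtFilter _ _) hA.continuousAt

lemma contF (hA : Continuous A) (T : ℝ) : Continuous fun s => ∫ v in s..T, A v :=
  continuous_iff_continuousAt.2 fun u => (hasDerivF hA T u).continuousAt

lemma F_split (hA : Continuous A) (T u s : ℝ) :
    (∫ v in u..T, A v) = (∫ v in u..s, A v) + ∫ v in s..T, A v :=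
  (intervalIntegral.integral_add_adjacent_intervals (hA.intervalIntegrable _ _)
    (hA.intervalIntegrable _ _)).symm

lemma m1_split (hA : Continuous A) (s T : ℝ) : m1 A 0 T = m1 A 0 s * m1 A s T := by
  simp only [m1]
  rw [← Real.exp_add, F_split hA T 0 s]

lemma m2_split (hA : Continuous A) (s T : ℝ) :
    m2 A 0 T = m2 A s T + m1 A s T * m2 A 0 s := by
  have hg : Continuous fun u => Real.exp (∫ v in u..T, A v) :=
    Real.continuous_exp.comp (contF hA T)
  have h1 : (∫ u in (0:ℝ)..s, Real.exp (∫ v in u..T, A v)) + m2 A s T = m2 A 0 T :=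
    intervalIntegral.integral_add_adjacent_intervals (hg.intervalIntegrable _ _)
      (hg.intervalIntegrable _ _)
  have h2 : (∫ u in (0:ℝ)..s, Real.exp (∫ v in u..T, A v)) = m1 A s T * m2 A 0 s := by
    rw [m2, ← intervalIntegral.integral_const_mul]
    apply intervalIntegral.integral_congr
    intro u hu
    simp only [m1]
    rw [F_split hA T u s, Real.exp_add]
    ring
  rw [← h1, h2, add_comm]

lemma sig2_split (hA : Continuous A) (s T : ℝ) :
    sig2 A 0 T = sig2 A s T + (m1 A s T)^2 * sig2 A 0 s := by
  have hg : Continuous fun u => Real.exp (2 * ∫ v in u..T, A v) :=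
    Real.continuous_exp.comp (continuous_const.mul (contF hA T))
  have h1 : (∫ u in (0:ℝ)..s, Real.exp (2 * ∫ v in u..T, A v)) + sig2 A s T = sig2 A 0 T :=
    intervalIntegral.integral_add_adjacent_intervals (hg.intervalIntegrable _ _)
      (hg.intervalIntegrable _ _)
  have h2 : (∫ u in (0:ℝ)..s, Real.exp (2 * ∫ v in u..T, A v))
      = (m1 A s T)^2 * sig2 A 0 s := by
    rw [sig2, ← intervalIntegral.integral_const_mul]
    apply intervalIntegral.integral_congr
    intro u hu
    simp only [m1]
    have e : ∀ x : ℝ, Real.exp x ^ 2 = Real.exp (2*x) := fun x => by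
      rw [sq, ← Real.exp_add, two_mul]
    rw [F_split hA T u s, e, ← Real.exp_add]
    congr 1
    ring
  rw [← h1, h2, add_comm]

lemma hasDeriv_m2 (hA : Continuous A) (T s : ℝ) :
    HasDerivAt (fun s' => m2 A s' T) (-(m1 A s T)) s := by
  have hg : Continuous fun u => Real.exp (∫ v in u..T, A v) :=
    Real.continuous_exp.comp (contF hA T)
  exact intervalIntegral.integral_hasDerivAt_left (hg.intervalIntegrable _ _)
    (hg.stronglyMeasurableAtFilter _ _) hg.continuousAt

lemma hasDeriv_sig2 (hA : Continuous A) (T s : ℝ) :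
    HasDerivAt (fun s' => sig2 A s' T) (-((m1 A s T)^2)) s := by
  have hg : Continuous fun u => Real.exp (2 * ∫ v in u..T, A v) :=
    Real.continuous_exp.comp (continuous_const.mul (contF hA T))
  have h := intervalIntegral.integral_hasDerivAt_left (hg.intervalIntegrable s T)
    (hg.stronglyMeasurableAtFilter _ _) hg.continuousAt
  refine h.congr_deriv ?_
  simp only [m1]
  rw [sq, ← Real.exp_add, two_mul]

lemma sig2_pos (hA : Continuous A) {s T : ℝ} (h : s < T) : 0 < sig2 A s T := by
  have hg : Continuous fun u => Real.exp (2 * ∫ v in u..T, A v) :=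
    Real.continuous_exp.comp (continuous_const.mul (contF hA T))
  exact intervalIntegral.intervalIntegral_pos_of_pos_on (hg.intervalIntegrable _ _)
    (fun x _ => Real.exp_pos _) h

lemma key_ineq (hA : Continuous A) (hApos : ∀ t, 0 ≤ A t) {s T : ℝ} (h : s ≤ T) :
    sig2 A s T ≤ m1 A s T * m2 A s T := by
  have hg : Continuous fun u => Real.exp (∫ v in u..T, A v) :=
    Real.continuous_exp.comp (contF hA T)
  have hg2 : Continuous fun u => Real.exp (2 * ∫ v in u..T, A v) :=
    Real.continuous_exp.comp (continuous_const.mul (contF hA T))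
  rw [m2, ← intervalIntegral.integral_const_mul]
  apply intervalIntegral.integral_mono_on h (hg2.intervalIntegrable _ _)
    ((continuous_const.mul hg).intervalIntegrable _ _)
  intro u hu
  simp only [m1, Pi.mul_apply]
  rw [two_mul, ← Real.exp_add]
  apply Real.exp_le_exp.2
  have h1 : (∫ v in s..T, A v) = (∫ v in s..u, A v) + ∫ v in u..T, A v :=
    F_split hA T s u
  have h2 : 0 ≤ ∫ v in s..u, A v :=
    intervalIntegral.integral_nonneg hu.1 (fun x _ => hApos x)
  linarith

theorem stmt_7 (A : ℝ → ℝ) (hA : Continuous A) (T : ℝ) (hT : 0 < T) :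
    (∀ s ∈ Set.Ioo (0:ℝ) T,
      g2 A s T = (sig2 A 0 T / m1 A 0 T) * (m2 A s T / sig2 A s T)
          - m2 A 0 T / m1 A 0 T ∧
      HasDerivAt (fun s' => g2 A s' T)
        (sig2 A 0 T / (m1 A 0 s * (sig2 A s T)^2)
          * (m1 A s T * m2 A s T - sig2 A s T)) s) ∧
    ((∀ t, 0 ≤ A t) → MonotoneOn (fun s => g2 A s T) (Set.Ioo 0 T)) := by
  have hm1pos : ∀ a b : ℝ, 0 < m1 A a b := fun a b => Real.exp_pos _
  have key1 : ∀ s ∈ Set.Ioo (0:ℝ) T,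
      g2 A s T = (sig2 A 0 T / m1 A 0 T) * (m2 A s T / sig2 A s T)
        - m2 A 0 T / m1 A 0 T := by
    intro s hs
    have hσ : sig2 A s T ≠ 0 := (sig2_pos hA hs.2).ne'
    have hm1s : m1 A 0 s ≠ 0 := (hm1pos 0 s).ne'
    have hm1sT : m1 A s T ≠ 0 := (hm1pos s T).ne'
    rw [g2, m2_split hA s T, sig2_split hA s T, m1_split hA s T]
    field_simp
    ring
  have hderiv : ∀ s ∈ Set.Ioo (0:ℝ) T,
      HasDerivAt (fun s' => g2 A s' T)
        (sig2 A 0 T / (m1 A 0 s * (sig2 A s T)^2)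
          * (m1 A s T * m2 A s T - sig2 A s T)) s := by
    intro s hs
    have hσ : sig2 A s T ≠ 0 := (sig2_pos hA hs.2).ne'
    have hm1s : m1 A 0 s ≠ 0 := (hm1pos 0 s).ne'
    have hm1sT : m1 A s T ≠ 0 := (hm1pos s T).ne'
    have hdiv := (hasDeriv_m2 hA T s).div (hasDeriv_sig2 hA T s) hσ
    have hfull := (hdiv.const_mul (sig2 A 0 T / m1 A 0 T)).sub_const (m2 A 0 T / m1 A 0 T)
    have heq : (fun s' => g2 A s' T) =ᶠ[nhds s]
        (fun s' => (sig2 A 0 T / m1 A 0 T) * (m2 A s' T / sig2 A s' T)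
          - m2 A 0 T / m1 A 0 T) := by
      filter_upwards [isOpen_Ioo.mem_nhds hs] with x hx using key1 x hx
    have h := hfull.congr_of_eventuallyEq heq
    refine h.congr_deriv ?_
    rw [m1_split hA s T]
    field_simp
    ring
  refine ⟨fun s hs => ⟨key1 s hs, hderiv s hs⟩, ?_⟩
  intro hApos
  have hdiff : ∀ x ∈ Set.Ioo (0:ℝ) T, DifferentiableAt ℝ (fun s => g2 A s T) x :=
    fun x hx => (hderiv x hx).differentiableAt
  apply monotoneOn_of_deriv_nonneg (convex_Ioo 0 T)
  · exact fun x hx => (hdiff x hx).continuousAt.continuousWithinAt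
  · rw [interior_Ioo]
    exact fun x hx => (hdiff x hx).differentiableWithinAt
  · intro x hx
    rw [interior_Ioo] at hx
    rw [(hderiv x hx).deriv]
    apply mul_nonneg
    · exact div_nonneg (sig2_pos hA hT).le
        (mul_nonneg (hm1pos 0 x).le (sq_nonneg _))
    · exact sub_nonneg.2 (key_ineq hA hApos hx.2.le)
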